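/- Let edges of a finite complete labeled graph be independently rerounded: pair e becomes positive with probability 1 − p_e and negative with probability p_e, and let OPT' denote the (random) optimal correlation clustering cost of the rerounded instance, and OPT that of the original. If p_e ≤ 2d_e for original positive pairs e, p_e = d_e for original negative pairs e, and Σ_{e positive} d_e + Σ_{e negative} (1 − d_e) ≤ β·OPT, then E[OPT'] ≤ (2β + 1)·OPT. -/

import Mathlib

open MeasureTheory

-- Correlation clustering cost of the clustering encoded by `c : V → V`
-- (two vertices are in the same cluster iff they get the same value) on the
-- complete labeled graph given by `t : Sym2 V → Bool` (`true` = positive).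
open Classical in
noncomputable def ccCost {V : Type*} [Fintype V] [DecidableEq V]
    (t : Sym2 V → Bool) (c : V → V) : ℕ :=
  (Finset.univ.filter (fun e : Sym2 V => ¬ e.IsDiag ∧
    ((t e = true ∧ ¬ (∀ u ∈ e, ∀ v ∈ e, c u = c v)) ∨
     (t e = false ∧ (∀ u ∈ e, ∀ v ∈ e, c u = c v))))).card

/-- Optimal correlation clustering cost of the labeling `t`. -/
noncomputable def ccOPT {V : Type*} [Fintype V] [DecidableEq V]
    (t : Sym2 V → Bool) : ℕ :=
  Finset.univ.inf' (@Finset.univ_nonempty (V → V) _ ⟨id⟩) (fun c => ccCost t c)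

open Classical in
theorem stmt18 {V : Type*} [Fintype V] [DecidableEq V]
    {Ω : Type*} [MeasurableSpace Ω] (μ : Measure Ω) [IsProbabilityMeasure μ]
    (s : Sym2 V → Bool)            -- original labeling: `true` = positive
    (σ : Ω → Sym2 V → Bool)        -- random rerounded labeling
    (hmeas : ∀ e, Measurable (fun ω => σ ω e))
    (hindep : ProbabilityTheory.iIndepFun
      (fun (e : Sym2 V) (ω : Ω) => σ ω e) μ)
    (p d : Sym2 V → ℝ)
    (hp01 : ∀ e, p e ∈ Set.Icc (0:ℝ) 1) (hd01 : ∀ e, d e ∈ Set.Icc (0:ℝ) 1)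
    (hprob : ∀ e : Sym2 V, ¬ e.IsDiag → (μ {ω | σ ω e = false}).toReal = p e)
    (hppos : ∀ e : Sym2 V, ¬ e.IsDiag → s e = true → p e ≤ 2 * d e)
    (hpneg : ∀ e : Sym2 V, ¬ e.IsDiag → s e = false → p e = d e)
    (β : ℝ) (hβ : 1 ≤ β)
    (hpred :
      (∑ e ∈ Finset.univ.filter (fun e : Sym2 V => ¬ e.IsDiag ∧ s e = true), d e)
        + (∑ e ∈ Finset.univ.filter (fun e : Sym2 V => ¬ e.IsDiag ∧ s e = false),
            (1 - d e))
        ≤ β * (ccOPT s : ℝ)) :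
    ∫ ω, (ccOPT (σ ω) : ℝ) ∂μ ≤ (2 * β + 1) * (ccOPT s : ℝ) := by
  -- pick an optimal clustering for the original instance
  obtain ⟨c, -, hc⟩ := Finset.exists_mem_eq_inf'
    (@Finset.univ_nonempty (V → V) _ ⟨id⟩) (fun c => ccCost s c)
  -- the per-edge "bad event" predicate for clustering `c`
  set Q : Sym2 V → (Sym2 V → Bool) → Prop := fun e t =>
    ¬ e.IsDiag ∧
      ((t e = true ∧ ¬ (∀ u ∈ e, ∀ v ∈ e, c u = c v)) ∨
       (t e = false ∧ (∀ u ∈ e, ∀ v ∈ e, c u = c v))) with hQ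
  have hcost : ∀ t : Sym2 V → Bool, (ccCost t c : ℝ) =
      ∑ e : Sym2 V, if Q e t then (1:ℝ) else 0 := by
    intro t
    rw [ccCost, Finset.card_filter]
    push_cast
    rfl
  -- key per-edge facts
  have key : ∀ e : Sym2 V, MeasurableSet {ω | Q e (σ ω)} ∧
      (μ {ω | Q e (σ ω)}).toReal ≤
        (if Q e s then (1:ℝ) else 0) +
          ((if ¬ e.IsDiag ∧ s e = true then 2 * d e else 0) +
           (if ¬ e.IsDiag ∧ s e = false then 1 - d e else 0)) := by
    intro e
    by_cases hdiag : e.IsDiag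
    · have : {ω | Q e (σ ω)} = ∅ := by
        ext ω; simp [hQ, hdiag]
      rw [this]
      simp [hQ, hdiag]
    · have hBmeas : MeasurableSet {ω | σ ω e = false} :=
        (hmeas e) (measurableSet_singleton false)
      have hpe := hprob e hdiag
      have hple := hp01 e
      have hdle := hd01 e
      by_cases hT : ∀ u ∈ e, ∀ v ∈ e, c u = c v
      · -- together: bad event is `σ ω e = false`
        have hset : {ω | Q e (σ ω)} = {ω | σ ω e = false} := by
          ext ω
          simp only [hQ, Set.mem_setOf_eq]
          constructor
          · rintro ⟨-, h | h⟩
            · exact absurd hT h.2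
            · exact h.1
          · intro h; exact ⟨hdiag, Or.inr ⟨h, hT⟩⟩
        rw [hset, hpe]
        refine ⟨hBmeas, ?_⟩
        rcases Bool.dichotomy (s e) with hse | hse
        · -- s e = false : cost 1
          have : Q e s := by
            exact ⟨hdiag, Or.inr ⟨hse, hT⟩⟩
          rw [if_pos this]
          have h1 : (0:ℝ) ≤ 1 - d e := by linarith [hdle.2]
          have h2 : p e ≤ 1 := hple.2
          simp [hdiag, hse]
          linarith
        · -- s e = true : p e ≤ 2 d e
          have hq : ¬ Q e s := by
            rintro ⟨-, ⟨-, h⟩ | ⟨h, -⟩⟩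
            · exact h hT
            · rw [hse] at h; cases h
          rw [if_neg hq]
          have := hppos e hdiag hse
          simp [hdiag, hse]
          linarith
      · -- separated: bad event is `σ ω e = true`
        have hset : {ω | Q e (σ ω)} = {ω | σ ω e = false}ᶜ := by
          ext ω
          simp only [hQ, Set.mem_setOf_eq, Set.mem_compl_iff]
          constructor
          · rintro ⟨-, h | h⟩
            · simp [h.1]
            · exact absurd h.2 hT
          · intro h; exact ⟨hdiag, Or.inl ⟨by simpa using h, hT⟩⟩
        have hμ : (μ {ω | Q e (σ ω)}).toReal = 1 - p e := by
          rw [hset, measure_compl hBmeas (measure_ne_top μ _), measure_univ]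
          rw [ENNReal.toReal_sub_of_le (prob_le_one) (by simp)]
          rw [hpe]; simp
        rw [hμ]
        refine ⟨by rw [hset]; exact hBmeas.compl, ?_⟩
        rcases Bool.dichotomy (s e) with hse | hse
        · -- s e = false : 1 - p e = 1 - d e
          have hq : ¬ Q e s := by
            simp [hQ, hdiag, hse, hT]
          rw [if_neg hq]
          have := hpneg e hdiag hse
          have h0 : (0:ℝ) ≤ d e := hdle.1
          simp [hdiag, hse]
          linarith
        · -- s e = true : cost 1
          have hq : Q e s := ⟨hdiag, Or.inl ⟨hse, hT⟩⟩
          rw [if_pos hq]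
          have h0 : (0:ℝ) ≤ p e := hple.1
          have h0' : (0:ℝ) ≤ d e := hdle.1
          simp [hdiag, hse]
          linarith
  -- integrability of the cost of `c` on the rerounded instance
  have hindic : ∀ e : Sym2 V, (fun ω => if Q e (σ ω) then (1:ℝ) else 0)
      = Set.indicator {ω | Q e (σ ω)} (fun _ => (1:ℝ)) := by
    intro e; funext ω
    by_cases h : Q e (σ ω) <;> simp [Set.indicator_apply, h]
  have hintegr : Integrable (fun ω => (ccCost (σ ω) c : ℝ)) μ := by
    simp only [hcost]
    apply integrable_finset_sum
    intro e _
    rw [hindic e]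
    exact (integrable_const (1:ℝ)).indicator (key e).1
  -- pointwise bound OPT' ≤ cost of c*
  have hpt : ∀ ω, (ccOPT (σ ω) : ℝ) ≤ (ccCost (σ ω) c : ℝ) := by
    intro ω
    exact_mod_cast Nat.cast_le.mpr (Finset.inf'_le _ (Finset.mem_univ c))
  have step1 : ∫ ω, (ccOPT (σ ω) : ℝ) ∂μ ≤ ∫ ω, (ccCost (σ ω) c : ℝ) ∂μ := by
    apply integral_mono_of_nonneg
    · exact Filter.Eventually.of_forall fun ω => by positivity
    · exact hintegr
    · exact Filter.Eventually.of_forall hpt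
  -- compute the expectation
  have step2 : ∫ ω, (ccCost (σ ω) c : ℝ) ∂μ
      = ∑ e : Sym2 V, (μ {ω | Q e (σ ω)}).toReal := by
    simp only [hcost]
    rw [integral_finset_sum]
    · refine Finset.sum_congr rfl fun e _ => ?_
      rw [hindic e, integral_indicator_const _ (key e).1]
      simp
      rfl
    · intro e _
      rw [hindic e]
      exact (integrable_const (1:ℝ)).indicator (key e).1
  -- sum the per-edge bounds
  have step3 : ∑ e : Sym2 V, (μ {ω | Q e (σ ω)}).toReal ≤
      (ccCost s c : ℝ) +
        (2 * (∑ e ∈ Finset.univ.filter (fun e : Sym2 V => ¬ e.IsDiag ∧ s e = true), d e)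
          + ∑ e ∈ Finset.univ.filter (fun e : Sym2 V => ¬ e.IsDiag ∧ s e = false), (1 - d e)) := by
    have := Finset.sum_le_sum (fun e (_ : e ∈ Finset.univ) => (key e).2)
    refine this.trans (le_of_eq ?_)
    have e2 : ∑ e : Sym2 V, (if ¬ e.IsDiag ∧ s e = true then 2 * d e else 0)
        = 2 * ∑ e ∈ Finset.univ.filter (fun e : Sym2 V => ¬ e.IsDiag ∧ s e = true), d e := by
      rw [Finset.mul_sum, Finset.sum_filter]
    have e3 : ∑ e : Sym2 V, (if ¬ e.IsDiag ∧ s e = false then 1 - d e else 0)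
        = ∑ e ∈ Finset.univ.filter (fun e : Sym2 V => ¬ e.IsDiag ∧ s e = false), (1 - d e) := by
      rw [Finset.sum_filter]
    rw [Finset.sum_add_distrib, Finset.sum_add_distrib, hcost s, e2, e3]
  -- final arithmetic
  have hOPT : (ccCost s c : ℝ) = (ccOPT s : ℝ) := by
    exact_mod_cast congrArg (Nat.cast (R := ℝ)) hc.symm
  have hOPTnn : (0:ℝ) ≤ (ccOPT s : ℝ) := by positivity
  have hnegnn : (0:ℝ) ≤ ∑ e ∈ Finset.univ.filter
      (fun e : Sym2 V => ¬ e.IsDiag ∧ s e = false), (1 - d e) := by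
    apply Finset.sum_nonneg
    intro e _
    linarith [(hd01 e).2]
  calc ∫ ω, (ccOPT (σ ω) : ℝ) ∂μ ≤ ∫ ω, (ccCost (σ ω) c : ℝ) ∂μ := step1
    _ = ∑ e : Sym2 V, (μ {ω | Q e (σ ω)}).toReal := step2
    _ ≤ (ccCost s c : ℝ) + (2 * _ + _) := step3
    _ ≤ (ccOPT s : ℝ) + 2 * (β * (ccOPT s : ℝ)) := by
        rw [hOPT]
        nlinarith [hpred]
    _ = (2 * β + 1) * (ccOPT s : ℝ) := by ring
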